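/- For any integers n, m ≥ 4 there exists an oriented graph G = (V, E) with |V| = n and |E| = m such that ν(G) ≥ 2⁻¹⁴ · (min(|V|², |E|) · min(|V|, |E|)). -/

import Mathlib

/-- An oriented graph: finite nonempty sets of vertices and edges with
origin and tail maps. -/
structure OrientedGraph where
  V : Type
  E : Type
  [fintypeV : Fintype V]
  [fintypeE : Fintype E]
  [nonemptyV : Nonempty V]
  [nonemptyE : Nonempty E]
  o : E → V
  t : E → V

attribute [instance] OrientedGraph.fintypeV OrientedGraph.fintypeE
  OrientedGraph.nonemptyV OrientedGraph.nonemptyE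

namespace OrientedGraph

variable (G : OrientedGraph)

/-- `G.IsPath p u v` : the edge sequence `p` is a path from `u` to `v`
(consecutive edges are composable; paths of length 0 at any vertex are allowed). -/
def IsPath (p : List G.E) (u v : G.V) : Prop :=
  List.Chain' (fun e f => G.t e = G.o f) p ∧
  ((p = [] ∧ u = v) ∨
    ∃ h : p ≠ [], u = G.o (p.head h) ∧ v = G.t (p.getLast h))

/-- The label of an edge sequence: the product of the labels of its edges
(the empty sequence maps to `1`). -/
def labelProd {M : Type} [Monoid M] (l : G.E → M) (s : List G.E) : M :=
  (s.map l).prod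

/-- The diagram `(G, l)` is commutative: any two paths with the same origin and
the same tail have equal labels. -/
def IsCommutative {M : Type} [Monoid M] (l : G.E → M) : Prop :=
  ∀ (u v : G.V) (p₁ p₂ : List G.E),
    G.IsPath p₁ u v → G.IsPath p₂ u v → G.labelProd l p₁ = G.labelProd l p₂

/-- A complete system of relations for `G`: for every monoid `M` and every
labeling `l : E → M`, the diagram `(G, l)` is commutative iff all relations hold. -/
def IsComplete (R : Finset (List G.E × List G.E)) : Prop :=
  ∀ (M : Type) [Monoid M], ∀ l : G.E → M,
    G.IsCommutative l ↔ ∀ r ∈ R, G.labelProd l r.1 = G.labelProd l r.2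

/-- A minimal complete system of relations: no proper subset is complete. -/
def IsMinimalComplete (R : Finset (List G.E × List G.E)) : Prop :=
  G.IsComplete R ∧ ∀ R' : Finset (List G.E × List G.E), R' ⊂ R → ¬ G.IsComplete R'

/-- The commutativity rank `η(G)`: the minimal cardinality of a complete
system of relations for `G`. -/
noncomputable def eta : ℕ :=
  sInf {n : ℕ | ∃ R : Finset (List G.E × List G.E), G.IsComplete R ∧ R.card = n}

/-- `S'` is obtained from `S` by one multiplication. -/
def MulStep (S S' : Set (List G.E)) : Prop :=
  ∃ s ∈ S, ∃ s' ∈ S, S' = S ∪ {s ++ s'}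

/-- `G.mCost S S'` : the minimal number of multiplications needed to obtain `S'`
from `S` (`⊤` if impossible). -/
noncomputable def mCost (S S' : Set (List G.E)) : ℕ∞ :=
  sInf {k : ℕ∞ | ∃ n : ℕ, k = n ∧ ∃ f : ℕ → Set (List G.E),
    f 0 = S ∧ f n = S' ∧ ∀ i < n, G.MulStep (f i) (f (i + 1))}

/-- `S_R`: the set of all edge sequences appearing in the relations of `R`. -/
def relSet (R : Finset (List G.E × List G.E)) : Set (List G.E) :=
  {s | ∃ r ∈ R, s = r.1 ∨ s = r.2}

/-- `ℰ`: the empty sequence together with all one-edge sequences. -/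
def baseSet : Set (List G.E) :=
  {s | s = [] ∨ ∃ e : G.E, s = [e]}

/-- `m(R)`: the minimal number of multiplications needed to build all sequences
appearing in `R`, starting from `ℰ`. -/
noncomputable def mRel (R : Finset (List G.E × List G.E)) : ℕ∞ :=
  sInf {k : ℕ∞ | ∃ S : Set (List G.E), G.relSet R ⊆ S ∧ k = G.mCost G.baseSet S}

/-- The multiplication rank `ν(G)`. -/
noncomputable def nu : ℕ∞ :=
  sInf {k : ℕ∞ | ∃ R : Finset (List G.E × List G.E), G.IsComplete R ∧ k = G.mRel R}

/-- A 4-tuple of edges `(a, b, c, d)` forms a rhomboid. -/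
def IsRhomboid (r : G.E × G.E × G.E × G.E) : Prop :=
  G.o r.1 = G.o r.2.2.1 ∧ G.t r.2.1 = G.t r.2.2.2 ∧
  G.t r.1 = G.o r.2.1 ∧ G.t r.2.2.1 = G.o r.2.2.2 ∧
  G.o r.1 ≠ G.t r.1 ∧ G.o r.1 ≠ G.o r.2.2.2 ∧ G.o r.1 ≠ G.t r.2.2.2 ∧
  G.t r.1 ≠ G.o r.2.2.2 ∧ G.t r.1 ≠ G.t r.2.2.2 ∧ G.o r.2.2.2 ≠ G.t r.2.2.2

/-- Two rhomboids `(a, b, c, d)` and `(a', b', c', d')` are disjoint. -/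
def RhDisjoint (r r' : G.E × G.E × G.E × G.E) : Prop :=
  (r.1 ≠ r'.1 ∨ r.2.1 ≠ r'.2.1) ∧
  (r.1 ≠ r'.2.2.1 ∨ r.2.1 ≠ r'.2.2.2) ∧
  (r.2.2.1 ≠ r'.2.2.1 ∨ r.2.2.2 ≠ r'.2.2.2) ∧
  (r.2.2.1 ≠ r'.1 ∨ r.2.2.2 ≠ r'.2.1)

/-- `𝔯𝔥(G)`: the maximal cardinality of a family of pairwise disjoint rhomboids in `G`. -/
noncomputable def rhNum : ℕ :=
  sSup {n : ℕ | ∃ F : Finset (G.E × G.E × G.E × G.E),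
    (∀ r ∈ F, G.IsRhomboid r) ∧
    (∀ r ∈ F, ∀ r' ∈ F, r ≠ r' → G.RhDisjoint r r') ∧ F.card = n}

/-- `𝔏(G)`: the number of loops of `G`. -/
noncomputable def loopCount : ℕ :=
  Nat.card {e : G.E // G.o e = G.t e}

/-- `G` is quasi-acyclic: no directed cycle visiting two or more distinct vertices. -/
def QuasiAcyclic : Prop :=
  ∀ u v : G.V, u ≠ v →
    ∀ p q : List G.E, G.IsPath p u v → G.IsPath q v u → False

/-- `G` is 2-path-bounded: every oriented path avoiding loop edges has length at most 2. -/
def TwoPathBounded : Prop :=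
  ∀ (p : List G.E) (u v : G.V), G.IsPath p u v →
    (∀ e ∈ p, G.o e ≠ G.t e) → p.length ≤ 2

/-- `G` has a pair of multiple edges. -/
def HasMultipleEdges : Prop :=
  ∃ e e' : G.E, e ≠ e' ∧ G.t e = G.t e' ∧ G.o e = G.o e' ∧ G.t e ≠ G.o e

/-- `G` has a triangle. -/
def HasTriangle : Prop :=
  ∃ a b c : G.E, G.o a = G.o b ∧ G.t b = G.o c ∧ G.t c = G.t a ∧
    G.o a ≠ G.t a ∧ G.o b ≠ G.t b ∧ G.o c ≠ G.t c

/-- `G` has no loops. -/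
def NoLoops : Prop := ∀ e : G.E, G.o e ≠ G.t e

/-- Every edge occurring on either side of the relation `r` is a loop. -/
def AllLoops (r : List G.E × List G.E) : Prop :=
  (∀ e ∈ r.1, G.o e = G.t e) ∧ (∀ e ∈ r.2, G.o e = G.t e)

/-- Both sides of the relation `r` contain at least one non-loop edge. -/
def BothSidesNonLoop (r : List G.E × List G.E) : Prop :=
  (∃ e ∈ r.1, G.o e ≠ G.t e) ∧ (∃ e ∈ r.2, G.o e ≠ G.t e)

end OrientedGraph

/-- The triploid `T(n₁, n₂, n₃, n₀, e)`. -/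
def Triploid (n₁ n₂ n₃ n₀ e : ℕ) (hn₁ : 0 < n₁) (he : n₂ * (n₁ + n₃) ≤ e)
    (he₀ : 0 < e) : OrientedGraph where
  V := Fin n₀ ⊕ Fin n₁ ⊕ Fin n₂ ⊕ Fin n₃
  E := (Fin n₁ × Fin n₂) ⊕ (Fin n₂ × Fin n₃) ⊕ Fin (e - n₂ * (n₁ + n₃))
  nonemptyV := ⟨Sum.inr (Sum.inl ⟨0, hn₁⟩)⟩
  nonemptyE := by
    by_cases h : n₂ * (n₁ + n₃) < e
    · exact ⟨Sum.inr (Sum.inr ⟨0, by omega⟩)⟩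
    · have h2 : 0 < n₂ := by
        rcases Nat.eq_zero_or_pos n₂ with h0 | h0
        · exfalso; subst h0; simp at h; omega
        · exact h0
      exact ⟨Sum.inl (⟨0, hn₁⟩, ⟨0, h2⟩)⟩
  o := Sum.elim (fun p => Sum.inr (Sum.inl p.1))
        (Sum.elim (fun p => Sum.inr (Sum.inr (Sum.inl p.1)))
          (fun _ => Sum.inr (Sum.inl ⟨0, hn₁⟩)))
  t := Sum.elim (fun p => Sum.inr (Sum.inr (Sum.inl p.2)))
        (Sum.elim (fun p => Sum.inr (Sum.inr (Sum.inr p.2)))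
          (fun _ => Sum.inr (Sum.inl ⟨0, hn₁⟩)))


-- ===== PM monoid =====
inductive PM (V : Type) : Type where
  | zero : PM V
  | one : PM V
  | pair (a b : V) : PM V
  deriving DecidableEq

namespace PM

variable {V : Type} [DecidableEq V]

def pmul : PM V → PM V → PM V
  | .one, y => y
  | .zero, _ => .zero
  | .pair a b, .one => .pair a b
  | .pair _ _, .zero => .zero
  | .pair a b, .pair c d => if b = c then .pair a d else .zero

instance : Monoid (PM V) where
  mul := pmul
  one := .one
  one_mul x := by cases x <;> rfl
  mul_one x := by cases x <;> rfl
  mul_assoc x y z := by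
    show pmul (pmul x y) z = pmul x (pmul y z)
    cases x <;> cases y <;> cases z <;> simp only [pmul] <;>
      split_ifs <;> simp_all [pmul]

@[simp] theorem one_def : (1 : PM V) = PM.one := rfl
@[simp] theorem mul_def (x y : PM V) : x * y = pmul x y := rfl

end PM

-- ===== phi : word structure invariant =====
namespace OrientedGraph

variable (G : OrientedGraph) [DecidableEq G.V]

/-- The endpoint-structure labeling into the pair monoid. -/
def phi (s : List G.E) : PM G.V := (s.map fun e => PM.pair (G.o e) (G.t e)).prod

@[simp] theorem phi_nil : G.phi [] = 1 := rfl

@[simp] theorem phi_cons (e : G.E) (s : List G.E) :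
    G.phi (e :: s) = PM.pair (G.o e) (G.t e) * G.phi s := by
  simp [phi]

theorem phi_append (s s' : List G.E) : G.phi (s ++ s') = G.phi s * G.phi s' := by
  simp [phi]


/-- `phi` of a nonempty composable chain is the `pair` of its endpoints. -/
theorem phi_chain (s : List G.E) (h : s ≠ [])
    (hc : List.Chain' (fun e f => G.t e = G.o f) s) :
    G.phi s = PM.pair (G.o (s.head h)) (G.t (s.getLast h)) := by
  induction s with
  | nil => exact absurd rfl h
  | cons e tl ih =>
    rcases tl with _ | ⟨f, tl'⟩
    · simp [phi, PM.pmul]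
    · obtain ⟨hef, hc'⟩ := List.isChain_cons_cons.mp hc
      have := ih (by simp) hc'
      simp only [phi_cons] at this ⊢
      rw [this]
      simp [PM.pmul, hef, List.getLast_cons]

/-- Structure of `phi`: it is `1` exactly on the empty word, `pair` on chains,
`zero` otherwise. -/
theorem phi_structure (s : List G.E) :
    (s = [] ∧ G.phi s = 1) ∨
    (∃ h : s ≠ [], List.Chain' (fun e f => G.t e = G.o f) s ∧
      G.phi s = PM.pair (G.o (s.head h)) (G.t (s.getLast h))) ∨
    G.phi s = PM.zero := by
  induction s with
  | nil => exact Or.inl ⟨rfl, rfl⟩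
  | cons e tl ih =>
    rcases ih with ⟨h1, h2⟩ | ⟨h, hc, hp⟩ | h0
    · subst h1
      exact Or.inr (Or.inl ⟨by simp, List.isChain_singleton _, G.phi_chain [e] (by simp) (List.isChain_singleton _)⟩)
    · rcases tl with _ | ⟨f, tl'⟩
      · exact absurd rfl h
      by_cases hef : G.t e = G.o f
      · have hc2 : List.Chain' (fun e f => G.t e = G.o f) (e :: f :: tl') :=
          List.isChain_cons_cons.mpr ⟨hef, hc⟩
        exact Or.inr (Or.inl ⟨by simp, hc2, G.phi_chain _ (by simp) hc2⟩)
      · refine Or.inr (Or.inr ?_)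
        rw [phi_cons, hp]
        simp only [List.head_cons] at *
        simp [PM.pmul, hef]
    · refine Or.inr (Or.inr ?_)
      rw [phi_cons, h0]
      rfl

theorem phi_ne_one {s : List G.E} (h : s ≠ []) : G.phi s ≠ 1 := by
  rcases G.phi_structure s with ⟨h1, _⟩ | ⟨_, _, hp⟩ | h0
  · exact absurd h1 h
  · rw [hp]; exact fun h => by cases h
  · rw [h0]; exact fun h => by cases h

theorem eq_nil_of_phi_eq_one {s : List G.E} (h : G.phi s = 1) : s = [] := by
  by_contra hne; exact G.phi_ne_one hne h

theorem phi_eq_pair {s : List G.E} {a b : G.V} (h : G.phi s = PM.pair a b) :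
    ∃ hne : s ≠ [], List.Chain' (fun e f => G.t e = G.o f) s ∧
      a = G.o (s.head hne) ∧ b = G.t (s.getLast hne) := by
  rcases G.phi_structure s with ⟨h1, h2⟩ | ⟨hne, hc, hp⟩ | h0
  · rw [h2] at h; exact absurd h.symm (by exact fun h => by cases h)
  · rw [hp] at h
    injection h with h1 h2
    exact ⟨hne, hc, h1.symm, h2.symm⟩
  · rw [h0] at h; exact absurd h (by exact fun h => by cases h)

/-- On a nonempty path, `phi` is the `pair` of the endpoints. -/
theorem phi_isPath {s : List G.E} {u v : G.V} (h : G.IsPath s u v) (hne : s ≠ []) :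
    G.phi s = PM.pair u v := by
  obtain ⟨hc, h2⟩ := h
  rcases h2 with ⟨rfl, _⟩ | ⟨h, rfl, rfl⟩
  · exact absurd rfl hne
  exact G.phi_chain s h hc

end OrientedGraph

-- ===== generic: rank increase implies acyclicity =====
namespace OrientedGraph

variable (G : OrientedGraph) [DecidableEq G.V]

omit [DecidableEq G.V] in
theorem chain_rank (rk : G.V → ℕ) (hrk : ∀ e : G.E, rk (G.o e) < rk (G.t e))
    (s : List G.E) (h : s ≠ []) (hc : List.Chain' (fun e f => G.t e = G.o f) s) :
    rk (G.o (s.head h)) < rk (G.t (s.getLast h)) := by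
  induction s with
  | nil => exact absurd rfl h
  | cons e tl ih =>
    rcases tl with _ | ⟨f, tl'⟩
    · simpa using hrk e
    · obtain ⟨hef, hc'⟩ := List.isChain_cons_cons.mp hc
      have h2 := ih (by simp) hc'
      simp only [List.head_cons, List.getLast_cons_cons] at h2 ⊢
      calc rk (G.o e) < rk (G.t e) := hrk e
        _ = rk (G.o ((f :: tl').head (by simp))) := by rw [hef]; rfl
        _ < _ := h2
      
omit [DecidableEq G.V] in
theorem no_cycle (rk : G.V → ℕ) (hrk : ∀ e : G.E, rk (G.o e) < rk (G.t e))
    {s : List G.E} {u : G.V} (hne : s ≠ []) (h : G.IsPath s u u) : False := by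
  obtain ⟨hc, h2⟩ := h
  rcases h2 with ⟨rfl, _⟩ | ⟨hn, hu, hv⟩
  · exact hne rfl
  · have := G.chain_rank rk hrk s hn hc
    rw [← hu, ← hv] at this
    exact lt_irrefl _ this

end OrientedGraph

-- ===== The test graph =====
namespace NuLB

/-- The layered test graph: `q` sources, `p` middle vertices, `q` sinks, `n₀`
isolated vertices; complete bipartite edge sets between consecutive layers and
`x` extra edges parallel to the edge from source 0 to middle 0. -/
def TG (n₀ q' p' x : ℕ) : OrientedGraph where
  V := Fin n₀ ⊕ Fin (q' + 1) ⊕ Fin (p' + 2) ⊕ Fin (q' + 1)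
  E := (Fin (q' + 1) × Fin (p' + 2)) ⊕ (Fin (p' + 2) × Fin (q' + 1)) ⊕ Fin x
  nonemptyV := ⟨Sum.inr (Sum.inl 0)⟩
  nonemptyE := ⟨Sum.inl (0, 0)⟩
  o := Sum.elim (fun a => Sum.inr (Sum.inl a.1))
        (Sum.elim (fun a => Sum.inr (Sum.inr (Sum.inl a.1))) fun _ => Sum.inr (Sum.inl 0))
  t := Sum.elim (fun a => Sum.inr (Sum.inr (Sum.inl a.2)))
        (Sum.elim (fun a => Sum.inr (Sum.inr (Sum.inr a.2))) fun _ => Sum.inr (Sum.inr (Sum.inl 0)))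

variable {n₀ q' p' x : ℕ}

instance : DecidableEq (TG n₀ q' p' x).V :=
  inferInstanceAs (DecidableEq (Fin n₀ ⊕ Fin (q' + 1) ⊕ Fin (p' + 2) ⊕ Fin (q' + 1)))

instance : DecidableEq (TG n₀ q' p' x).E :=
  inferInstanceAs (DecidableEq ((Fin (q' + 1) × Fin (p' + 2)) ⊕ (Fin (p' + 2) × Fin (q' + 1)) ⊕ Fin x))

/-- vertex in the first layer -/
abbrev inI (i : Fin (q' + 1)) : (TG n₀ q' p' x).V := Sum.inr (Sum.inl i)
/-- vertex in the middle layer -/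
abbrev inJ (j : Fin (p' + 2)) : (TG n₀ q' p' x).V := Sum.inr (Sum.inr (Sum.inl j))
/-- vertex in the last layer -/
abbrev inK (k : Fin (q' + 1)) : (TG n₀ q' p' x).V := Sum.inr (Sum.inr (Sum.inr k))
/-- edge from layer 1 to layer 2 -/
abbrev Ee (i : Fin (q' + 1)) (j : Fin (p' + 2)) : (TG n₀ q' p' x).E := Sum.inl (i, j)
/-- edge from layer 2 to layer 3 -/
abbrev Ef (j : Fin (p' + 2)) (k : Fin (q' + 1)) : (TG n₀ q' p' x).E := Sum.inr (Sum.inl (j, k))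

@[simp] theorem o_Ee (i j) : (TG n₀ q' p' x).o (Ee i j) = inI i := rfl
@[simp] theorem t_Ee (i j) : (TG n₀ q' p' x).t (Ee i j) = inJ j := rfl
@[simp] theorem o_Ef (j k) : (TG n₀ q' p' x).o (Ef j k) = inJ j := rfl
@[simp] theorem t_Ef (j k) : (TG n₀ q' p' x).t (Ef j k) = inK k := rfl
@[simp] theorem o_ex (r : Fin x) :
    (TG n₀ q' p' x).o (Sum.inr (Sum.inr r)) = inI 0 := rfl
@[simp] theorem t_ex (r : Fin x) :
    (TG n₀ q' p' x).t (Sum.inr (Sum.inr r)) = inJ 0 := rfl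

/-- rank of a vertex -/
def rk : (TG n₀ q' p' x).V → ℕ :=
  Sum.elim (fun _ => 0) (Sum.elim (fun _ => 1) (Sum.elim (fun _ => 2) fun _ => 3))

theorem rk_lt : ∀ e : (TG n₀ q' p' x).E, rk ((TG n₀ q' p' x).o e) < rk ((TG n₀ q' p' x).t e) := by
  rintro (⟨i, j⟩ | ⟨j, k⟩ | r) <;> simp [rk, TG]

/-- classification: a word whose `phi` is `pair (inJ j) (inK k)` is the single
edge `Ef j k`. -/
theorem phi_JK {s : List (TG n₀ q' p' x).E} {j k}
    (h : (TG n₀ q' p' x).phi s = PM.pair (inJ j) (inK k)) : s = [Ef j k] := by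
  obtain ⟨hne, hc, ha, hb⟩ := (TG n₀ q' p' x).phi_eq_pair h
  rcases s with _ | ⟨y, tl⟩
  · exact absurd rfl hne
  simp only [List.head_cons] at ha
  rcases y with ⟨i₁, j₁⟩ | ⟨j₁, k₁⟩ | r
  · exact absurd ha (by simp [TG])
  · -- y = Ef j₁ k₁
    have hj : j = j₁ := by simpa [TG] using ha
    rcases tl with _ | ⟨z, tl'⟩
    · have hk : k = k₁ := by simpa [TG] using hb
      rw [hj, hk]
    · exfalso
      have hzy := (List.isChain_cons_cons.mp hc).1
      rcases z with ⟨i₂, j₂⟩ | ⟨j₂, k₂⟩ | r₂ <;> simpa [TG] using hzy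
  · exact absurd ha (by simp [TG])

/-- classification: a word whose `phi` is `pair (inI i) (inJ j)` with
`(i, j) ≠ (0, 0)` is the single edge `Ee i j`. -/
theorem phi_IJ {s : List (TG n₀ q' p' x).E} {i j}
    (h : (TG n₀ q' p' x).phi s = PM.pair (inI i) (inJ j))
    (hij : ¬(i = 0 ∧ j = 0)) : s = [Ee i j] := by
  obtain ⟨hne, hc, ha, hb⟩ := (TG n₀ q' p' x).phi_eq_pair h
  rcases s with _ | ⟨y, tl⟩
  · exact absurd rfl hne
  simp only [List.head_cons] at ha
  have htail : tl = [] := by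
    rcases tl with _ | ⟨z, tl'⟩
    · rfl
    exfalso
    have hzy := (List.isChain_cons_cons.mp hc).1
    -- t y = o z ; t y is in layer J (y starts at layer I), so z must be an Ef edge
    rcases z with ⟨i₂, j₂⟩ | ⟨j₂, k₂⟩ | r₂
    · rcases y with ⟨i₁, j₁⟩ | ⟨j₁, k₁⟩ | r₁ <;> simp [TG] at hzy ha
    · -- z = Ef j₂ k₂; then the last edge of z :: tl' ends in layer K or beyond
      rcases tl' with _ | ⟨w, tl''⟩
      · have hb' : inJ j = (TG n₀ q' p' x).t (Ef j₂ k₂) := hb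
        have := congrArg rk hb'; simp [rk, TG] at this
      · have hwz := (List.isChain_cons_cons.mp (List.isChain_cons_cons.mp hc).2).1
        rcases w with ⟨i₃, j₃⟩ | ⟨j₃, k₃⟩ | r₃ <;> simp [TG] at hwz
    · rcases y with ⟨i₁, j₁⟩ | ⟨j₁, k₁⟩ | r₁ <;> simp [TG] at hzy ha
  subst htail
  rcases y with ⟨i₁, j₁⟩ | ⟨j₁, k₁⟩ | r₁
  · have h1 : i = i₁ := by simpa [TG] using ha
    have h2 : j = j₁ := by simpa [TG] using hb
    rw [h1, h2]
  · exact absurd ha (by simp [TG])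
  · exfalso
    have h1 : i = (0 : Fin (q' + 1)) := by simpa [TG] using ha
    have h2 : j = (0 : Fin (p' + 2)) := by simpa [TG] using hb
    exact hij ⟨h1, h2⟩

end NuLB

-- ===== The path congruence =====
namespace OrientedGraph

variable (G : OrientedGraph)

/-- Two words are related if they are paths with common endpoints. -/
def pathRel (a b : FreeMonoid G.E) : Prop :=
  ∃ u v : G.V, G.IsPath (FreeMonoid.toList a) u v ∧ G.IsPath (FreeMonoid.toList b) u v

/-- The congruence on the free monoid generated by all pairs of parallel paths. -/
def pathCon : Con (FreeMonoid G.E) := conGen G.pathRel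

theorem labelProd_mk' (c : Con (FreeMonoid G.E)) (s : List G.E) :
    G.labelProd (fun e => c.mk' (FreeMonoid.of e)) s = c.mk' (FreeMonoid.ofList s) := by
  induction s with
  | nil => rfl
  | cons e tl ih =>
    rw [labelProd, List.map_cons, List.prod_cons]
    rw [labelProd] at ih
    rw [ih, ← MonoidHom.map_mul, ← FreeMonoid.ofList_cons]

/-- The canonical labeling into the quotient by the path congruence is
commutative. -/
theorem pathCon_comm : G.IsCommutative (fun e => G.pathCon.mk' (FreeMonoid.of e)) := by
  intro u v p₁ p₂ h₁ h₂
  rw [labelProd_mk', labelProd_mk']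
  exact G.pathCon.eq.mpr (ConGen.Rel.of _ _ ⟨u, v, h₁, h₂⟩)

variable [DecidableEq G.V]

/-- `phi` is invariant under the path congruence, provided the graph is graded
by a rank function. -/
theorem pathCon_phi (rk : G.V → ℕ) (hrk : ∀ e : G.E, rk (G.o e) < rk (G.t e))
    {a b : FreeMonoid G.E} (h : G.pathCon a b) :
    G.phi (FreeMonoid.toList a) = G.phi (FreeMonoid.toList b) := by
  have hle : G.pathCon ≤ Con.ker (FreeMonoid.lift fun e => PM.pair (G.o e) (G.t e)) := by
    apply Con.conGen_le.mpr
    rintro s s' ⟨u, v, hs, hs'⟩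
    rw [Con.ker_rel, FreeMonoid.lift_apply, FreeMonoid.lift_apply]
    show G.phi _ = G.phi _
    rcases eq_or_ne (FreeMonoid.toList s) [] with h1 | h1 <;>
      rcases eq_or_ne (FreeMonoid.toList s') [] with h2 | h2
    · rw [h1, h2]
    · obtain ⟨_, h3⟩ := hs
      rcases h3 with ⟨_, rfl⟩ | ⟨hn, _, _⟩
      · exact (G.no_cycle rk hrk h2 hs').elim
      · exact absurd h1 hn
    · obtain ⟨_, h3⟩ := hs'
      rcases h3 with ⟨_, rfl⟩ | ⟨hn, _, _⟩
      · exact (G.no_cycle rk hrk h1 hs).elim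
      · exact absurd h2 hn
    · rw [G.phi_isPath hs h1, G.phi_isPath hs' h2]
  have := hle h
  rw [Con.ker_rel, FreeMonoid.lift_apply, FreeMonoid.lift_apply] at this
  exact this

end OrientedGraph

namespace NuLB

open OrientedGraph

variable {n₀ q' p' x : ℕ}

/-- The test word for the triple `(i, jj, k)`. -/
def w₀ (i : Fin (q' + 1)) (jj : Fin (p' + 2)) (k : Fin (q' + 1)) :
    List (TG n₀ q' p' x).E := [Ee i jj, Ef jj k]

theorem isPath_w₀ (i : Fin (q' + 1)) (jj : Fin (p' + 2)) (k : Fin (q' + 1)) :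
    (TG n₀ q' p' x).IsPath (w₀ i jj k) (inI i) (inK k) := by
  refine ⟨?_, Or.inr ⟨by simp [w₀], rfl, rfl⟩⟩
  simp [w₀, List.Chain', List.isChain_cons_cons]

theorem phi_w₀_left {i : Fin (q' + 1)} {jj : Fin (p' + 2)} :
    (TG n₀ q' p' x).phi [Ee i jj] = PM.pair (inI i) (inJ jj) := by
  simp [phi, PM.pmul]

theorem phi_w₀_right {jj : Fin (p' + 2)} {k : Fin (q' + 1)} :
    (TG n₀ q' p' x).phi [Ef jj k] = PM.pair (inJ jj) (inK k) := by
  simp [phi, PM.pmul]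

section TestCon

variable (i : Fin (q' + 1)) (jj : Fin (p' + 2)) (k : Fin (q' + 1))
  (hij : ¬(i = 0 ∧ jj = 0))

/-- Auxiliary step for multiplicativity of the test congruence. -/
theorem testCon_aux (hij : ¬(i = 0 ∧ jj = 0)) {w xx y z : FreeMonoid (TG n₀ q' p' x).E}
    (hwx : (TG n₀ q' p' x).pathCon w xx) (hyz : (TG n₀ q' p' x).pathCon y z)
    (h1 : w.toList = w₀ i jj k → xx.toList = w₀ i jj k)
    (h2 : y.toList = w₀ i jj k → z.toList = w₀ i jj k)
    (h : (w * y).toList = w₀ i jj k) : (xx * z).toList = w₀ i jj k := by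
  have hphiw := (TG n₀ q' p' x).pathCon_phi rk rk_lt hwx
  have hphiy := (TG n₀ q' p' x).pathCon_phi rk rk_lt hyz
  rw [FreeMonoid.toList_mul] at h ⊢
  rcases wl : w.toList with _ | ⟨c, _ | ⟨d, _ | ⟨e, tl⟩⟩⟩
  · -- w empty
    rw [wl] at h hphiw
    simp only [List.nil_append] at h
    have hx : xx.toList = [] :=
      (TG n₀ q' p' x).eq_nil_of_phi_eq_one (by rw [← hphiw]; rfl)
    rw [hx, h2 h]
    simp
  · -- w a single letter
    rw [wl] at h hphiw
    have hc : c = Ee i jj ∧ y.toList = [Ef jj k] := by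
      have h' := h
      simp [w₀] at h'
      exact ⟨h'.1, h'.2⟩
    have hx : xx.toList = [Ee i jj] := by
      apply phi_IJ _ hij
      rw [← hphiw, hc.1]
      exact phi_w₀_left
    have hz : z.toList = [Ef jj k] := by
      apply phi_JK
      rw [← hphiy, hc.2]
      exact phi_w₀_right
    rw [hx, hz]; rfl
  · -- w has two letters, y is empty
    rw [wl] at h hphiw
    have hy : y.toList = [] := by
      have hlen := congrArg List.length h
      simp only [List.length_append, List.length_cons, List.length_nil, w₀] at hlen
      have : y.toList.length = 0 := by omega
      exact List.eq_nil_of_length_eq_zero this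
    rw [hy] at h
    simp only [List.append_nil] at h
    have hx : xx.toList = w₀ i jj k := h1 (by rw [wl]; exact h)
    have hz : z.toList = [] :=
      (TG n₀ q' p' x).eq_nil_of_phi_eq_one (by rw [← hphiy, hy]; rfl)
    rw [hx, hz]
    simp
  · -- w too long
    exfalso
    rw [wl] at h
    have hlen := congrArg List.length h
    simp only [List.length_append, List.length_cons, List.length_nil, w₀] at hlen
    omega

/-- The test congruence: path congruence refined by splitting off the class of
the single test word `w₀ i jj k`. -/
def testCon : Con (FreeMonoid (TG n₀ q' p' x).E) where
  r a b := (TG n₀ q' p' x).pathCon a b ∧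
    (a.toList = w₀ i jj k ↔ b.toList = w₀ i jj k)
  iseqv := by
    refine ⟨fun a => ⟨(TG n₀ q' p' x).pathCon.refl a, Iff.rfl⟩, ?_, ?_⟩
    · rintro a b ⟨h1, h2⟩
      exact ⟨(TG n₀ q' p' x).pathCon.symm h1, h2.symm⟩
    · rintro a b c ⟨h1, h2⟩ ⟨h3, h4⟩
      exact ⟨(TG n₀ q' p' x).pathCon.trans h1 h3, h2.trans h4⟩
  mul' := by
    rintro w xx y z ⟨hwx1, hwx2⟩ ⟨hyz1, hyz2⟩
    refine ⟨(TG n₀ q' p' x).pathCon.mul hwx1 hyz1, ?_⟩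
    constructor
    · exact testCon_aux i jj k hij hwx1 hyz1 hwx2.mp hyz2.mp
    · exact testCon_aux i jj k hij ((TG n₀ q' p' x).pathCon.symm hwx1)
        ((TG n₀ q' p' x).pathCon.symm hyz1) hwx2.mpr hyz2.mpr

end TestCon

end NuLB

namespace NuLB

open OrientedGraph

variable {n₀ q' p' x : ℕ}

/-- Every complete system of relations must mention every test word. -/
theorem w₀_mem_relSet (R : Finset (List (TG n₀ q' p' x).E × List (TG n₀ q' p' x).E))
    (hR : (TG n₀ q' p' x).IsComplete R) (i : Fin (q' + 1)) (jj : Fin (p' + 2))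
    (k : Fin (q' + 1)) (hij : ¬(i = 0 ∧ jj = 0)) :
    w₀ i jj k ∈ (TG n₀ q' p' x).relSet R := by
  by_contra hmem
  -- all relations of R are consequences of commutativity, hence hold in the
  -- path congruence quotient
  have hΘ : ∀ r ∈ R, (TG n₀ q' p' x).pathCon (FreeMonoid.ofList r.1) (FreeMonoid.ofList r.2) := by
    intro r hr
    have hcomm := (TG n₀ q' p' x).pathCon_comm
    have := (hR _ (fun e => (TG n₀ q' p' x).pathCon.mk' (FreeMonoid.of e))).mp hcomm r hr
    rw [labelProd_mk', labelProd_mk'] at this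
    exact ((TG n₀ q' p' x).pathCon.eq).mp this
  -- hence all relations of R hold in the test congruence quotient
  have hΨ : ∀ r ∈ R, (TG n₀ q' p' x).labelProd
      (fun e => (testCon i jj k hij).mk' (FreeMonoid.of e)) r.1 =
      (TG n₀ q' p' x).labelProd
      (fun e => (testCon i jj k hij).mk' (FreeMonoid.of e)) r.2 := by
    intro r hr
    rw [labelProd_mk', labelProd_mk']
    refine ((testCon i jj k hij).eq).mpr ⟨hΘ r hr, ?_⟩
    constructor
    · intro h1; exact absurd ⟨r, hr, Or.inl h1.symm⟩ hmem
    · intro h2; exact absurd ⟨r, hr, Or.inr h2.symm⟩ hmem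
  -- so the test labeling is commutative: contradiction with the two split paths
  have hcomm := (hR _ (fun e => (testCon i jj k hij).mk' (FreeMonoid.of e))).mpr hΨ
  set jj' : Fin (p' + 2) := if jj = 0 then 1 else 0 with hjj'
  have hne : jj' ≠ jj := by
    rcases eq_or_ne jj 0 with h | h
    · rw [hjj', if_pos h, h]; exact one_ne_zero
    · rw [hjj', if_neg h]; exact fun hcon => h hcon.symm
  have := hcomm (inI i) (inK k) (w₀ i jj k) (w₀ i jj' k)
    (isPath_w₀ i jj k) (isPath_w₀ i jj' k)
  rw [labelProd_mk', labelProd_mk'] at this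
  have h2 := ((testCon i jj k hij).eq).mp this
  have h3 : (FreeMonoid.ofList (w₀ i jj' k) : FreeMonoid (TG n₀ q' p' x).E).toList
      = w₀ i jj k := h2.2.mp rfl
  rw [FreeMonoid.toList_ofList] at h3
  have : jj' = jj := by
    have h4 := List.head_eq_of_cons_eq h3
    have h5 : (i, jj') = (i, jj) := Sum.inl.inj h4
    exact (Prod.mk.injEq .. ▸ h5 : _ ∧ _).2
  exact hne this

end NuLB

namespace OrientedGraph

variable (G : OrientedGraph)

/-- Each multiplication step adds at most one word. -/
theorem mulChain_bound (f : ℕ → Set (List G.E)) :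
    ∀ n : ℕ, (∀ i < n, G.MulStep (f i) (f (i + 1))) →
      ∃ F : Finset (List G.E), F.card ≤ n ∧ f n ⊆ f 0 ∪ ↑F := by
  classical
  intro n
  induction n with
  | zero => exact fun _ => ⟨∅, by simp⟩
  | succ n ih =>
    intro hstep
    obtain ⟨F, hF, hsub⟩ := ih fun i hi => hstep i (Nat.lt_succ_of_lt hi)
    obtain ⟨s, _, s', _, heq⟩ := hstep n (Nat.lt_succ_self n)
    refine ⟨insert (s ++ s') F, ?_, ?_⟩
    · calc (insert (s ++ s') F).card ≤ F.card + 1 := Finset.card_insert_le _ _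
        _ ≤ n + 1 := by omega
    · rw [heq]
      intro w hw
      rcases hw with hw | hw
      · rcases hsub hw with h | h
        · exact Or.inl h
        · exact Or.inr (by simp only [Finset.coe_insert, Set.mem_insert_iff]; exact Or.inr h)
      · refine Or.inr ?_
        simp only [Finset.coe_insert, Set.mem_insert_iff]
        exact Or.inl hw

end OrientedGraph

namespace NuLB

open OrientedGraph

variable (n₀ q' p' x : ℕ)

/-- The finite set of all test words. -/
noncomputable def testWords : Finset (List (TG n₀ q' p' x).E) :=
  (Finset.univ : Finset (Fin (q' + 1) × Fin (p' + 1) × Fin (q' + 1))).image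
    (fun t => w₀ t.1 t.2.1.succ t.2.2)

theorem testWords_card : (testWords n₀ q' p' x).card = (q' + 1) * ((p' + 1) * (q' + 1)) := by
  rw [testWords, Finset.card_image_of_injective]
  · simp
  · rintro ⟨i, j, k⟩ ⟨i', j', k'⟩ h
    simp only [w₀, List.cons.injEq] at h
    obtain ⟨h1, h2, -⟩ := h
    replace h1 := Prod.mk.inj (Sum.inl.inj h1)
    replace h2 := Prod.mk.inj (Sum.inl.inj (Sum.inr.inj h2))
    exact Prod.ext h1.1 (Prod.ext (Fin.succ_injective _ h1.2) h2.2)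

/-- Main lower bound for the multiplication rank of the test graph. -/
theorem nu_TG :
    (((q' + 1) * ((p' + 1) * (q' + 1)) : ℕ) : ℕ∞) ≤ (TG n₀ q' p' x).nu := by
  refine le_sInf ?_
  rintro b ⟨R, hR, rfl⟩
  refine le_sInf ?_
  rintro k ⟨S, hsub, rfl⟩
  refine le_sInf ?_
  rintro k' ⟨nst, rfl, f, hf0, hfn, hstep⟩
  rw [Nat.cast_le]
  obtain ⟨F, hF, hFsub⟩ := (TG n₀ q' p' x).mulChain_bound f nst hstep
  have hWF : testWords n₀ q' p' x ⊆ F := by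
    intro w hw
    obtain ⟨⟨i, j, k⟩, -, rfl⟩ := Finset.mem_image.mp hw
    have hmem : w₀ i j.succ k ∈ (TG n₀ q' p' x).relSet R :=
      w₀_mem_relSet R hR i j.succ k (fun h => Fin.succ_ne_zero j h.2)
    have : w₀ i j.succ k ∈ f nst := by rw [hfn]; exact hsub hmem
    rcases hFsub this with h | h
    · exfalso
      rw [hf0] at h
      rcases h with h | ⟨e, h⟩ <;> simp [w₀] at h
    · exact h
  calc (q' + 1) * ((p' + 1) * (q' + 1)) = (testWords n₀ q' p' x).card :=
        (testWords_card n₀ q' p' x).symm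
    _ ≤ F.card := Finset.card_le_card hWF
    _ ≤ nst := hF

theorem card_V_TG : Fintype.card (TG n₀ q' p' x).V = n₀ + ((q' + 1) + ((p' + 2) + (q' + 1))) := by
  show Fintype.card (Fin n₀ ⊕ Fin (q' + 1) ⊕ Fin (p' + 2) ⊕ Fin (q' + 1)) = _
  simp

theorem card_E_TG : Fintype.card (TG n₀ q' p' x).E =
    (q' + 1) * (p' + 2) + ((p' + 2) * (q' + 1) + x) := by
  show Fintype.card ((Fin (q' + 1) × Fin (p' + 2)) ⊕ (Fin (p' + 2) × Fin (q' + 1)) ⊕ Fin x) = _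
  simp

end NuLB

namespace NuLB

/-- Parameter selection. -/
theorem params (n m : ℕ) (hn : 4 ≤ n) (hm : 4 ≤ m) :
    ∃ q p : ℕ, 1 ≤ q ∧ 2 ≤ p ∧ 2 * q + p ≤ n ∧ 2 * (q * p) ≤ m ∧
      min (n ^ 2) m * min n m ≤ 2 ^ 14 * (q * ((p - 1) * q)) := by
  rcases le_or_gt (min n m) 15 with hsmall | hbig
  · refine ⟨1, 2, le_refl 1, le_refl 2, by omega, by omega, ?_⟩
    have h1 : min (n ^ 2) m ≤ m := min_le_right _ _
    have h2 : min (n ^ 2) m ≤ n ^ 2 := min_le_left _ _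
    have h3 : min n m ≤ n := min_le_left _ _
    have h4 : min n m ≤ m := min_le_right _ _
    rcases le_total n m with h | h
    · have hn15 : n ≤ 15 := by omega
      have : n ^ 2 ≤ 225 := by nlinarith
      calc min (n ^ 2) m * min n m ≤ n ^ 2 * n := Nat.mul_le_mul h2 h3
        _ ≤ 225 * 15 := Nat.mul_le_mul this hn15
        _ ≤ 2 ^ 14 * (1 * ((2 - 1) * 1)) := by norm_num
    · have hm15 : m ≤ 15 := by omega
      calc min (n ^ 2) m * min n m ≤ m * m := Nat.mul_le_mul h1 h4
        _ ≤ 15 * 15 := Nat.mul_le_mul hm15 hm15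
        _ ≤ 2 ^ 14 * (1 * ((2 - 1) * 1)) := by norm_num
  · set Q := min n m with hQ
    have hQn : Q ≤ n := min_le_left _ _
    have hQm : Q ≤ m := min_le_right _ _
    have hQ16 : 16 ≤ Q := hbig
    set q := Q / 4 with hq
    have hq4 : 4 * q ≤ Q := by rw [hq]; omega
    have hq4' : Q < 4 * q + 4 := by rw [hq]; omega
    have hqge : 4 ≤ q := by omega
    have h8q : Q ≤ 8 * q := by omega
    set p := min (n - 2 * q) (m / (2 * q)) with hp
    have hpn : p ≤ n - 2 * q := min_le_left _ _
    have hpm : p ≤ m / (2 * q) := min_le_right _ _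
    have h2q0 : 0 < 2 * q := by omega
    have hdiv : 2 * q * (m / (2 * q)) ≤ m := by
      rw [mul_comm]; exact Nat.div_mul_le_self m (2 * q)
    have hqpm : 2 * (q * p) ≤ m := by
      calc 2 * (q * p) = 2 * q * p := by ring
        _ ≤ 2 * q * (m / (2 * q)) := Nat.mul_le_mul_left _ hpm
        _ ≤ m := hdiv
    have hp2 : 2 ≤ p := by
      apply le_min
      · omega
      · rw [Nat.le_div_iff_mul_le h2q0]; omega
    refine ⟨q, p, by omega, hp2, by omega, hqpm, ?_⟩
    have hPm : min (n ^ 2) m ≤ m := min_le_right _ _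
    have hPnQ : min (n ^ 2) m ≤ n * Q := by
      rcases le_total n m with h | h
      · have : Q = n := by rw [hQ, min_eq_left h]
        rw [this]
        calc min (n ^ 2) m ≤ n ^ 2 := min_le_left _ _
          _ = n * n := sq n
      · have : Q = m := by rw [hQ, min_eq_right h]
        rw [this]
        calc min (n ^ 2) m ≤ m := min_le_right _ _
          _ ≤ n * m := Nat.le_mul_of_pos_left m (by omega)
    have hpp : p ≤ 2 * (p - 1) := by omega
    rcases min_cases (n - 2 * q) (m / (2 * q)) with ⟨hcase, -⟩ | ⟨hcase, -⟩
    · -- p = n - 2q, so 2p ≥ n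
      have hpe : p = n - 2 * q := by rw [hp, hcase]
      have hnp : n ≤ 2 * p := by omega
      calc min (n ^ 2) m * Q ≤ n * Q * Q := Nat.mul_le_mul_right _ hPnQ
        _ ≤ 2 * p * (8 * q) * (8 * q) :=
            Nat.mul_le_mul (Nat.mul_le_mul hnp h8q) h8q
        _ = 128 * (p * (q * q)) := by ring
        _ ≤ 128 * (2 * (p - 1) * (q * q)) :=
            Nat.mul_le_mul_left _ (Nat.mul_le_mul_right _ hpp)
        _ ≤ 2 ^ 14 * (q * ((p - 1) * q)) := by ring_nf; nlinarith [Nat.zero_le ((p-1) * (q*q))]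
    · -- p = m / (2q), so 4pq ≥ m
      have hmp : m ≤ 4 * (p * q) := by
        have hpe : p = m / (2 * q) := by rw [hp, hcase]
        have hmod := Nat.div_add_mod m (2 * q)
        have hlt := Nat.mod_lt m h2q0
        have hD : 2 ≤ m / (2 * q) := le_trans hp2 (hpe ▸ hpm)
        have h2' : 2 * q * 2 ≤ 2 * q * (m / (2 * q)) := Nat.mul_le_mul_left _ hD
        have e1 : 4 * (p * q) = 2 * (2 * q * (m / (2 * q))) := by rw [hpe]; ring
        omega
      calc min (n ^ 2) m * Q ≤ 4 * (p * q) * (8 * q) :=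
            Nat.mul_le_mul (le_trans hPm hmp) h8q
        _ = 32 * (p * (q * q)) := by ring
        _ ≤ 32 * (2 * (p - 1) * (q * q)) :=
            Nat.mul_le_mul_left _ (Nat.mul_le_mul_right _ hpp)
        _ ≤ 2 ^ 14 * (q * ((p - 1) * q)) := by ring_nf; nlinarith [Nat.zero_le ((p-1) * (q*q))]

end NuLB

/-- Theorem (lower bound on multiplication rank): for any `n, m ≥ 4` there is a graph
with `n` vertices and `m` edges such that
`ν(G) ≥ 2⁻¹⁴ · (min(|V|², |E|) · min(|V|, |E|))`. -/
theorem nu_lower_bound (n m : ℕ) (hn : 4 ≤ n) (hm : 4 ≤ m) :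
    ∃ G : OrientedGraph, Fintype.card G.V = n ∧ Fintype.card G.E = m ∧
      ((min (Fintype.card G.V ^ 2) (Fintype.card G.E) *
          min (Fintype.card G.V) (Fintype.card G.E) : ℕ) : ℕ∞) ≤
        2 ^ 14 * G.nu := by
  obtain ⟨q, p, hq1, hp2, hvert, hedge, hbound⟩ := NuLB.params n m hn hm
  have e1 : q - 1 + 1 = q := by omega
  have e2 : p - 2 + 2 = p := by omega
  have e3 : p - 2 + 1 = p - 1 := by omega
  refine ⟨NuLB.TG (n - (2 * q + p)) (q - 1) (p - 2) (m - 2 * (q * p)), ?_, ?_, ?_⟩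
  · rw [NuLB.card_V_TG, e1, e2]; omega
  · rw [NuLB.card_E_TG, e1, e2, mul_comm p q]; omega
  · have hcV : Fintype.card (NuLB.TG (n - (2 * q + p)) (q - 1) (p - 2) (m - 2 * (q * p))).V = n := by
      rw [NuLB.card_V_TG, e1, e2]; omega
    have hcE : Fintype.card (NuLB.TG (n - (2 * q + p)) (q - 1) (p - 2) (m - 2 * (q * p))).E = m := by
      rw [NuLB.card_E_TG, e1, e2, mul_comm p q]; omega
    rw [hcV, hcE]
    have hnu := NuLB.nu_TG (n - (2 * q + p)) (q - 1) (p - 2) (m - 2 * (q * p))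
    rw [e1, e3] at hnu
    calc ((min (n ^ 2) m * min n m : ℕ) : ℕ∞)
        ≤ ((2 ^ 14 * (q * ((p - 1) * q)) : ℕ) : ℕ∞) := Nat.cast_le.mpr hbound
      _ = (2 ^ 14 : ℕ∞) * ((q * ((p - 1) * q) : ℕ) : ℕ∞) := by push_cast; ring
      _ ≤ 2 ^ 14 * (NuLB.TG (n - (2 * q + p)) (q - 1) (p - 2) (m - 2 * (q * p))).nu :=
          mul_le_mul_right hnu _
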